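/- Let ρ > 0, σ = ±1, s₁, s₂ ∈ ℂ with Im(s₁) ≠ −σ/(2ρ). Along the family of paths where ξ = x + 2σρt satisfies |ξ| = O(|t|) and W₁ := tη^{−2} − (σρ/3)η stays bounded (η = x − 2σρt, |η| → ∞), the second-order rational solution satisfies u₂(x,t)e^{−2iρ²t−iφ} → ρ[1 − 2iσ/(2σW₁ + 2ρs₁* − iσ)] with error O(|t|^{−1/3}). -/

import Mathlib

open Complex Filter Asymptotics

/-- The second-order rational solution of the defocusing nonlocal NLS equation. -/
noncomputable def u2sol (ρ σ φ : ℝ) (s1 s2 : ℂ) (x t : ℝ) : ℂ :=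
  let ξ' : ℂ := (x : ℂ) + 2 * σ * ρ * t + s1
  let η' : ℂ := (x : ℂ) - 2 * σ * ρ * t - (starRingEnd ℂ) s1
  let S : ℂ := (2 / 3) * ρ ^ 2 * ξ' ^ 3 + 2 * σ * ρ * t + ξ' + s2
  let R : ℂ := -((2 / 3) * ρ ^ 2 * η' ^ 3) + 2 * σ * ρ * t
      - 2 * Complex.I * σ * ρ * η' ^ 2 + η' + (starRingEnd ℂ) s2
  let P : ℂ := 1 - 4 * Complex.I * σ * ρ * R
  let Q : ℂ := 1 - 4 * Complex.I * σ * ρ * S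
  (ρ : ℂ) * Complex.exp (2 * Complex.I * ρ ^ 2 * t + Complex.I * φ) +
    8 * Complex.I * σ * ρ ^ 2 * Complex.exp (2 * Complex.I * ρ ^ 2 * t + Complex.I * φ) *
      (ρ ^ 2 * ξ' ^ 2 * R + ρ ^ 2 * η' ^ 2 * S + 2 * Complex.I * σ * ρ * η' * S - S) /
      (ρ ^ 2 * (ξ' ^ 2 * P + η' ^ 2 * Q + 2 * ξ' * η') +
        2 * ρ * ξ' * (2 * ρ * R + Complex.I * σ) +
        2 * ρ * η' * (2 * ρ * S + Complex.I * σ) - 4 * ρ ^ 2 * R * S - 1)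

/-! ### Auxiliary asymptotic machinery -/

/-- `ee a t = |t| ^ a`. -/
noncomputable def ee (a : ℝ) : ℝ → ℝ := fun t => |t| ^ a

lemma ev_abs_ge (M : ℝ) : ∀ᶠ t : ℝ in cocompact ℝ, M ≤ |t| := by
  simpa [Real.norm_eq_abs] using ((tendsto_norm_cocompact_atTop (E := ℝ)).eventually_ge_atTop M)

lemma ee_mul_ee (a b : ℝ) :
    (fun t => ee a t * ee b t) =ᶠ[cocompact ℝ] ee (a + b) := by
  filter_upwards [ev_abs_ge 1] with t ht
  have h0 : (0:ℝ) < |t| := lt_of_lt_of_le one_pos ht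
  simp [ee, Real.rpow_add h0]

lemma mulO {f g : ℝ → ℂ} {a b : ℝ} (hf : f =O[cocompact ℝ] ee a)
    (hg : g =O[cocompact ℝ] ee b) :
    (fun t => f t * g t) =O[cocompact ℝ] ee (a + b) :=
  (hf.mul hg).trans (ee_mul_ee a b).isBigO

lemma mulO' {f g : ℝ → ℂ} {a b : ℝ} (hf : ee a =O[cocompact ℝ] f)
    (hg : ee b =O[cocompact ℝ] g) :
    ee (a + b) =O[cocompact ℝ] (fun t => f t * g t) :=
  (ee_mul_ee a b).symm.isBigO.trans (hf.mul hg)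

lemma ee_le {a b : ℝ} (h : a ≤ b) : ee a =O[cocompact ℝ] ee b := by
  rw [isBigO_iff]
  refine ⟨1, ?_⟩
  filter_upwards [ev_abs_ge 1] with t ht
  have : |t| ^ a ≤ |t| ^ b := Real.rpow_le_rpow_of_exponent_le ht h
  simp only [ee, Real.norm_eq_abs]
  rw [_root_.abs_of_nonneg (Real.rpow_nonneg (abs_nonneg t) _),
    _root_.abs_of_nonneg (Real.rpow_nonneg (abs_nonneg t) _), one_mul]
  exact this

lemma ee_tendsto_zero {a : ℝ} (h : a < 0) :
    Tendsto (ee a) (cocompact ℝ) (nhds 0) := by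
  have h1 : Tendsto (fun s : ℝ => s ^ a) atTop (nhds 0) := by
    simpa using tendsto_rpow_neg_atTop (y := -a) (by linarith)
  have h2 : Tendsto (fun t : ℝ => |t|) (cocompact ℝ) atTop := by
    exact (tendsto_norm_cocompact_atTop (E := ℝ)).congr (fun t => Real.norm_eq_abs t)
  exact h1.comp h2

lemma ee_lt {a b : ℝ} (h : a < b) : ee a =o[cocompact ℝ] ee b := by
  have key : (fun t => ee b t * ee (a - b) t) =o[cocompact ℝ] (fun t => ee b t * 1) :=
    (isBigO_refl (ee b) _).mul_isLittleO
      ((isLittleO_one_iff ℝ).mpr (ee_tendsto_zero (by linarith)))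
  have e1 : (fun t => ee b t * ee (a-b) t) =ᶠ[cocompact ℝ] ee a := by
    simpa using ee_mul_ee b (a-b)
  exact e1.symm.trans_isLittleO (key.congr_right (fun t => mul_one _))

lemma constO (c : ℂ) : (fun _ : ℝ => c) =O[cocompact ℝ] ee 0 := by
  have h : ee 0 = fun _ : ℝ => (1:ℝ) := funext fun t => Real.rpow_zero _
  rw [h]
  exact isBigO_const_const c one_ne_zero _

lemma constO' {c : ℂ} (hc : c ≠ 0) : ee 0 =O[cocompact ℝ] (fun _ : ℝ => c) := by
  have h : ee 0 = fun _ : ℝ => (1:ℝ) := funext fun t => Real.rpow_zero _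
  rw [h]
  exact isBigO_const_const (1:ℝ) hc _

lemma coe_bigO (f : ℝ → ℝ) (l : Filter ℝ) :
    (fun t => ((f t : ℝ) : ℂ)) =O[l] f := by
  rw [isBigO_iff]
  exact ⟨1, by filter_upwards with t; simp⟩

lemma bigO_coe (f : ℝ → ℝ) (l : Filter ℝ) :
    f =O[l] (fun t => ((f t : ℝ) : ℂ)) := by
  rw [isBigO_iff]
  exact ⟨1, by filter_upwards with t; simp⟩

lemma id_O_ee1 : (fun t : ℝ => t) =O[cocompact ℝ] ee 1 := by
  rw [isBigO_iff]
  exact ⟨1, by filter_upwards with t; simp [ee]⟩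

lemma ee1_O_id : ee 1 =O[cocompact ℝ] (fun t : ℝ => t) := by
  rw [isBigO_iff]
  exact ⟨1, by filter_upwards with t; simp [ee]⟩

lemma one_O_ee0 : (fun _ : ℝ => (1:ℝ)) =O[cocompact ℝ] ee 0 := by
  have h : ee 0 = fun _ : ℝ => (1:ℝ) := funext fun t => Real.rpow_zero _
  rw [h]

lemma addO {f g : ℝ → ℂ} {a b : ℝ} (hf : ee a =O[cocompact ℝ] f)
    (hg : g =O[cocompact ℝ] ee b) (hlt : b < a) :
    ee a =O[cocompact ℝ] (fun t => f t + g t) := by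
  have h1 : g =o[cocompact ℝ] f := (hg.trans_isLittleO (ee_lt hlt)).trans_isBigO hf
  exact hf.trans (h1.right_isBigO_add.congr (fun _ => rfl) (fun t => add_comm _ _))

lemma addU {f g : ℝ → ℂ} {a b c : ℝ} (hf : f =O[cocompact ℝ] ee a)
    (hg : g =O[cocompact ℝ] ee b) (h1 : a ≤ c) (h2 : b ≤ c) :
    (fun t => f t + g t) =O[cocompact ℝ] ee c :=
  (hf.trans (ee_le h1)).add (hg.trans (ee_le h2))

lemma subU {f g : ℝ → ℂ} {a b c : ℝ} (hf : f =O[cocompact ℝ] ee a)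
    (hg : g =O[cocompact ℝ] ee b) (h1 : a ≤ c) (h2 : b ≤ c) :
    (fun t => f t - g t) =O[cocompact ℝ] ee c :=
  (hf.trans (ee_le h1)).sub (hg.trans (ee_le h2))

lemma cube_le {u v K : ℝ} (hu : 0 ≤ u) (hv : 0 ≤ v) (hK : 0 ≤ K)
    (h : u ^ 3 ≤ K * v) : u ≤ K ^ ((1:ℝ)/3) * v ^ ((1:ℝ)/3) := by
  have h1 : u = (u ^ 3) ^ ((1:ℝ)/3) := by
    rw [← Real.rpow_natCast u 3, ← Real.rpow_mul hu]
    norm_num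
  rw [h1, ← Real.mul_rpow hK hv]
  exact Real.rpow_le_rpow (by positivity) h (by norm_num)

lemma cube_le' {u v K : ℝ} (hu : 0 ≤ u) (hv : 0 ≤ v) (hK : 0 ≤ K)
    (h : u ≤ K * v ^ 3) : u ^ ((1:ℝ)/3) ≤ K ^ ((1:ℝ)/3) * v := by
  have h1 : (v ^ 3 : ℝ) ^ ((1:ℝ)/3) = v := by
    rw [← Real.rpow_natCast v 3, ← Real.rpow_mul hv]
    norm_num
  calc u ^ ((1:ℝ)/3) ≤ (K * v ^ 3) ^ ((1:ℝ)/3) :=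
        Real.rpow_le_rpow hu h (by norm_num)
    _ = K ^ ((1:ℝ)/3) * v := by rw [Real.mul_rpow hK (by positivity), h1]

/-! ### Components of the solution -/

noncomputable def lXi (ρ σ : ℝ) (s1 : ℂ) (x : ℝ → ℝ) (t : ℝ) : ℂ :=
  (x t : ℂ) + 2 * σ * ρ * t + s1

noncomputable def lEta (ρ σ : ℝ) (s1 : ℂ) (x : ℝ → ℝ) (t : ℝ) : ℂ :=
  (x t : ℂ) - 2 * σ * ρ * t - (starRingEnd ℂ) s1

noncomputable def lS (ρ σ : ℝ) (s1 s2 : ℂ) (x : ℝ → ℝ) (t : ℝ) : ℂ :=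
  (2 / 3) * ρ ^ 2 * lXi ρ σ s1 x t ^ 3 + 2 * σ * ρ * t + lXi ρ σ s1 x t + s2

noncomputable def lR (ρ σ : ℝ) (s1 s2 : ℂ) (x : ℝ → ℝ) (t : ℝ) : ℂ :=
  -((2 / 3) * ρ ^ 2 * lEta ρ σ s1 x t ^ 3) + 2 * σ * ρ * t
      - 2 * Complex.I * σ * ρ * lEta ρ σ s1 x t ^ 2 + lEta ρ σ s1 x t + (starRingEnd ℂ) s2

noncomputable def lP (ρ σ : ℝ) (s1 s2 : ℂ) (x : ℝ → ℝ) (t : ℝ) : ℂ :=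
  1 - 4 * Complex.I * σ * ρ * lR ρ σ s1 s2 x t

noncomputable def lQ (ρ σ : ℝ) (s1 s2 : ℂ) (x : ℝ → ℝ) (t : ℝ) : ℂ :=
  1 - 4 * Complex.I * σ * ρ * lS ρ σ s1 s2 x t

noncomputable def lN (ρ σ : ℝ) (s1 s2 : ℂ) (x : ℝ → ℝ) (t : ℝ) : ℂ :=
  ρ ^ 2 * lXi ρ σ s1 x t ^ 2 * lR ρ σ s1 s2 x t + ρ ^ 2 * lEta ρ σ s1 x t ^ 2 * lS ρ σ s1 s2 x t
    + 2 * Complex.I * σ * ρ * lEta ρ σ s1 x t * lS ρ σ s1 s2 x t - lS ρ σ s1 s2 x t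

noncomputable def lD (ρ σ : ℝ) (s1 s2 : ℂ) (x : ℝ → ℝ) (t : ℝ) : ℂ :=
  ρ ^ 2 * (lXi ρ σ s1 x t ^ 2 * lP ρ σ s1 s2 x t + lEta ρ σ s1 x t ^ 2 * lQ ρ σ s1 s2 x t
      + 2 * lXi ρ σ s1 x t * lEta ρ σ s1 x t) +
    2 * ρ * lXi ρ σ s1 x t * (2 * ρ * lR ρ σ s1 s2 x t + Complex.I * σ) +
    2 * ρ * lEta ρ σ s1 x t * (2 * ρ * lS ρ σ s1 s2 x t + Complex.I * σ)
    - 4 * ρ ^ 2 * lR ρ σ s1 s2 x t * lS ρ σ s1 s2 x t - 1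

noncomputable def letaR (ρ σ : ℝ) (x : ℝ → ℝ) (t : ℝ) : ℝ := x t - 2 * σ * ρ * t

noncomputable def lW (ρ σ : ℝ) (x : ℝ → ℝ) (t : ℝ) : ℝ :=
  t * (letaR ρ σ x t)⁻¹ ^ 2 - (σ * ρ / 3) * letaR ρ σ x t

noncomputable def ld (ρ σ : ℝ) (s1 : ℂ) (x : ℝ → ℝ) (t : ℝ) : ℂ :=
  2 * σ * ((lW ρ σ x t : ℝ) : ℂ) + 2 * ρ * (starRingEnd ℂ) s1 - Complex.I * σ

noncomputable def lM (ρ σ : ℝ) (s1 s2 : ℂ) (x : ℝ → ℝ) (t : ℝ) : ℂ :=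
  lR ρ σ s1 s2 x t + Complex.I * σ * ρ * lEta ρ σ s1 x t ^ 2

noncomputable def lE (ρ σ : ℝ) (s1 s2 : ℂ) (x : ℝ → ℝ) (t : ℝ) : ℂ :=
  (-(2 * ρ ^ 2 * ((starRingEnd ℂ) s1) ^ 2) + 2 * Complex.I * σ * ρ * (starRingEnd ℂ) s1 + 1)
      * ((letaR ρ σ x t : ℝ) : ℂ)
    + ((2/3) * ρ ^ 2 * ((starRingEnd ℂ) s1) ^ 3 - Complex.I * σ * ρ * ((starRingEnd ℂ) s1) ^ 2
        - (starRingEnd ℂ) s1 + (starRingEnd ℂ) s2)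

noncomputable def lDrest (ρ σ : ℝ) (s1 s2 : ℂ) (x : ℝ → ℝ) (t : ℝ) : ℂ :=
  ρ ^ 2 * lXi ρ σ s1 x t ^ 2 - 4 * Complex.I * σ * ρ ^ 3 * lXi ρ σ s1 x t ^ 2 * lR ρ σ s1 s2 x t
    + ρ ^ 2 * lEta ρ σ s1 x t ^ 2 + 2 * ρ ^ 2 * lXi ρ σ s1 x t * lEta ρ σ s1 x t
    + 4 * ρ ^ 2 * lXi ρ σ s1 x t * lR ρ σ s1 s2 x t + 2 * Complex.I * σ * ρ * lXi ρ σ s1 x t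
    + 4 * ρ ^ 2 * lEta ρ σ s1 x t * lS ρ σ s1 s2 x t + 2 * Complex.I * σ * ρ * lEta ρ σ s1 x t - 1

/-- Along paths where `ξ = x + 2σρt` is of order `|t|`, `|η| → ∞` and
`W₁ = tη^{−2} − (σρ/3)η` stays bounded, the second-order rational solution tends to the
first curved asymptotic soliton `ρ[1 − 2iσ/(2σW₁ + 2ρs₁* − iσ)]` (after removing the
phase), with error `O(|t|^{−1/3})`. -/
theorem second_order_first_asymptotic_soliton (ρ σ φ : ℝ) (hρ : 0 < ρ)
    (hσ : σ = 1 ∨ σ = -1) (s1 s2 : ℂ) (hs1 : s1.im ≠ -σ / (2 * ρ)) (x : ℝ → ℝ)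
    (hξO : (fun t : ℝ => x t + 2 * σ * ρ * t) =O[Filter.cocompact ℝ] (fun t : ℝ => t))
    (hOξ : (fun t : ℝ => t) =O[Filter.cocompact ℝ] (fun t : ℝ => x t + 2 * σ * ρ * t))
    (hη : Filter.Tendsto (fun t : ℝ => |x t - 2 * σ * ρ * t|) (Filter.cocompact ℝ)
      Filter.atTop)
    (hW : (fun t : ℝ => t * (x t - 2 * σ * ρ * t)⁻¹ ^ 2
        - (σ * ρ / 3) * (x t - 2 * σ * ρ * t))
      =O[Filter.cocompact ℝ] (fun _ : ℝ => (1 : ℝ))) :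
    (fun t : ℝ => u2sol ρ σ φ s1 s2 (x t) t *
        Complex.exp (-(2 * Complex.I * ρ ^ 2 * t) - Complex.I * φ)
      - (ρ : ℂ) * (1 - 2 * Complex.I * σ /
          (2 * σ * ((t * (x t - 2 * σ * ρ * t)⁻¹ ^ 2
              - (σ * ρ / 3) * (x t - 2 * σ * ρ * t) : ℝ) : ℂ)
            + 2 * ρ * (starRingEnd ℂ) s1 - Complex.I * σ)))
      =O[Filter.cocompact ℝ] (fun t : ℝ => |t| ^ (-(1 : ℝ) / 3)) := by
  have hσ2 : ((σ:ℂ))^2 = 1 := by rcases hσ with h | h <;> rw [h] <;> norm_num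
  have hσabs : |σ| = 1 := by rcases hσ with h | h <;> rw [h] <;> norm_num
  have hρC : (ρ:ℂ) ≠ 0 := by exact_mod_cast ne_of_gt hρ
  -- the limit denominator has nonzero imaginary part
  have c0pos : 0 < |2*ρ*s1.im + σ| := by
    rw [abs_pos]
    intro h
    exact hs1 (by field_simp; linear_combination h)
  have hdim : ∀ t : ℝ, (ld ρ σ s1 x t).im = -(2*ρ*s1.im + σ) := by
    intro t
    simp [ld, Complex.add_im, Complex.sub_im, Complex.mul_im, Complex.mul_re]
    ring
  have hdne : ∀ t : ℝ, ld ρ σ s1 x t ≠ 0 := by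
    intro t h
    have h1 := hdim t
    rw [h, Complex.zero_im] at h1
    have h2 : |2*ρ*s1.im + σ| = 0 := by rw [show 2*ρ*s1.im + σ = 0 by linarith, abs_zero]
    rw [h2] at c0pos
    exact lt_irrefl _ c0pos
  have hd_lo : ee 0 =O[cocompact ℝ] ld ρ σ s1 x := by
    rw [isBigO_iff]
    refine ⟨|2*ρ*s1.im + σ|⁻¹, Filter.Eventually.of_forall fun t => ?_⟩
    have h1 : |2*ρ*s1.im + σ| ≤ ‖ld ρ σ s1 x t‖ := by
      calc |2*ρ*s1.im + σ| = |(ld ρ σ s1 x t).im| := by rw [hdim t, abs_neg]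
        _ ≤ ‖ld ρ σ s1 x t‖ := Complex.abs_im_le_norm _
    have h2 : ‖ee 0 t‖ = 1 := by simp [ee]
    rw [h2, inv_mul_eq_div, le_div_iff₀ c0pos, one_mul]
    exact h1
  -- W is bounded
  have hWO : (fun t => lW ρ σ x t) =O[cocompact ℝ] (fun _ : ℝ => (1:ℝ)) := by
    simpa only [lW, letaR] using hW
  have hWcO : (fun t => ((lW ρ σ x t : ℝ):ℂ)) =O[cocompact ℝ] ee 0 :=
    (coe_bigO _ _).trans (hWO.trans one_O_ee0)
  have hd_up : ld ρ σ s1 x =O[cocompact ℝ] ee 0 := by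
    have h1 : ∀ t, ld ρ σ s1 x t = (2*(σ:ℂ)) * ((lW ρ σ x t : ℝ):ℂ)
        + (2*ρ*(starRingEnd ℂ) s1 - Complex.I*σ) := by
      intro t; simp only [ld]; ring
    exact (addU (hWcO.const_mul_left _) (constO _) le_rfl le_rfl).congr_left
      (fun t => (h1 t).symm)
  -- the variable ξ'
  have htO : (fun t : ℝ => (t:ℂ)) =O[cocompact ℝ] ee 1 := (coe_bigO _ _).trans id_O_ee1
  have hxiRO : (fun t => x t + 2*σ*ρ*t) =O[cocompact ℝ] ee 1 := hξO.trans id_O_ee1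
  have hXieq : ∀ t, lXi ρ σ s1 x t = ((x t + 2*σ*ρ*t : ℝ):ℂ) + s1 := by
    intro t; simp only [lXi]; push_cast; ring
  have hXi_up : lXi ρ σ s1 x =O[cocompact ℝ] ee 1 :=
    (addU ((coe_bigO _ _).trans hxiRO) (constO s1) le_rfl (by norm_num)).congr_left
      (fun t => (hXieq t).symm)
  have hOXi : ee 1 =O[cocompact ℝ] lXi ρ σ s1 x := by
    have hxx : ee 1 =O[cocompact ℝ] (fun t => ((x t + 2*σ*ρ*t : ℝ):ℂ)) :=
      (ee1_O_id.trans hOξ).trans (bigO_coe _ _)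
    have hc : (fun _ : ℝ => s1) =o[cocompact ℝ] (fun t => ((x t + 2*σ*ρ*t : ℝ):ℂ)) :=
      ((constO s1).trans_isLittleO (ee_lt (by norm_num : (0:ℝ) < 1))).trans_isBigO hxx
    exact (hxx.trans (hc.right_isBigO_add.congr (fun _ => rfl) (fun t => add_comm _ _))).congr_right
      (fun t => (hXieq t).symm)
  -- the variable η, real version
  obtain ⟨C3, hC3⟩ := isBigO_iff.mp hWO
  have heW : ∀ᶠ t in cocompact ℝ, |lW ρ σ x t| ≤ |C3| := by
    filter_upwards [hC3] with t ht
    rw [Real.norm_eq_abs, norm_one, mul_one] at ht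
    exact ht.trans (le_abs_self C3)
  have hetaBig : ∀ M : ℝ, ∀ᶠ t in cocompact ℝ, M ≤ |letaR ρ σ x t| := by
    intro M
    have := hη.eventually_ge_atTop M
    simpa only [letaR] using this
  have hKey : ∀ᶠ t in cocompact ℝ,
      ρ/6 * |letaR ρ σ x t|^3 ≤ |t| ∧ |t| ≤ ρ * |letaR ρ σ x t|^3 := by
    filter_upwards [heW, hetaBig (6*(|C3|+1)/ρ), hetaBig 1] with t hWt h6 h1
    have hane : letaR ρ σ x t ≠ 0 := by
      intro h; rw [h, abs_zero] at h1; linarith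
    have hid : t = lW ρ σ x t * (letaR ρ σ x t)^2 + σ*ρ/3*(letaR ρ σ x t)^3 := by
      simp only [lW]
      field_simp
      ring
    have habs3 : |σ*ρ/3*(letaR ρ σ x t)^3| = ρ/3 * |letaR ρ σ x t|^3 := by
      rw [abs_mul, abs_div, abs_mul, hσabs, _root_.abs_pow, abs_of_pos hρ]
      norm_num
    have hW2 : |lW ρ σ x t * (letaR ρ σ x t)^2| ≤ ρ/6 * |letaR ρ σ x t|^3 := by
      rw [abs_mul, _root_.abs_pow]
      have e1 : 6*(|C3|+1) ≤ ρ * |letaR ρ σ x t| := by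
        rw [div_le_iff₀ hρ] at h6
        nlinarith [h6]
      nlinarith [abs_nonneg (letaR ρ σ x t), abs_nonneg (lW ρ σ x t), hWt,
        sq_nonneg (letaR ρ σ x t), abs_nonneg C3]
    have h4 : σ*ρ/3*(letaR ρ σ x t)^3 = t - lW ρ σ x t * (letaR ρ σ x t)^2 := by
      linarith [hid]
    have h5 : |σ*ρ/3*(letaR ρ σ x t)^3| ≤ |t| + |lW ρ σ x t * (letaR ρ σ x t)^2| := by
      rw [h4]
      exact abs_sub _ _
    constructor
    · rw [habs3] at h5
      linarith
    · have h6' : |t| ≤ |lW ρ σ x t * (letaR ρ σ x t)^2| + |σ*ρ/3*(letaR ρ σ x t)^3| := by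
        calc |t| = |lW ρ σ x t * (letaR ρ σ x t)^2 + σ*ρ/3*(letaR ρ σ x t)^3| := by rw [← hid]
          _ ≤ _ := abs_add_le _ _
      rw [habs3] at h6'
      nlinarith [abs_nonneg (letaR ρ σ x t), pow_nonneg (abs_nonneg (letaR ρ σ x t)) 3]
  have hetaR_up : letaR ρ σ x =O[cocompact ℝ] ee (1/3) := by
    rw [isBigO_iff]
    refine ⟨(6/ρ)^((1:ℝ)/3), ?_⟩
    filter_upwards [hKey] with t ht
    have h2 : |letaR ρ σ x t|^3 ≤ (6/ρ) * |t| := by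
      rw [div_mul_eq_mul_div, le_div_iff₀ hρ]
      nlinarith [ht.1]
    have h3 := cube_le (abs_nonneg (letaR ρ σ x t)) (abs_nonneg t) (by positivity) h2
    simp only [Real.norm_eq_abs, ee]
    rw [_root_.abs_of_nonneg (Real.rpow_nonneg (abs_nonneg t) ((1:ℝ)/3))]
    exact h3
  have hOetaR : ee (1/3) =O[cocompact ℝ] letaR ρ σ x := by
    rw [isBigO_iff]
    refine ⟨ρ^((1:ℝ)/3), ?_⟩
    filter_upwards [hKey] with t ht
    have h3 := cube_le' (abs_nonneg t) (abs_nonneg (letaR ρ σ x t)) (le_of_lt hρ) ht.2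
    simp only [Real.norm_eq_abs, ee]
    rw [_root_.abs_of_nonneg (Real.rpow_nonneg (abs_nonneg t) ((1:ℝ)/3))]
    exact h3
  have hcoeEta_up : (fun t => ((letaR ρ σ x t : ℝ):ℂ)) =O[cocompact ℝ] ee (1/3) :=
    (coe_bigO _ _).trans hetaR_up
  have hOcoeEta : ee (1/3) =O[cocompact ℝ] (fun t => ((letaR ρ σ x t : ℝ):ℂ)) :=
    hOetaR.trans (bigO_coe _ _)
  have hEtaeq : ∀ t, lEta ρ σ s1 x t = ((letaR ρ σ x t : ℝ):ℂ) + (-((starRingEnd ℂ) s1)) := by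
    intro t; simp only [lEta, letaR]; push_cast; ring
  have hEta_up : lEta ρ σ s1 x =O[cocompact ℝ] ee (1/3) :=
    (addU hcoeEta_up (constO _) le_rfl (by norm_num)).congr_left (fun t => (hEtaeq t).symm)
  have hOEta : ee (1/3) =O[cocompact ℝ] lEta ρ σ s1 x := by
    have hc : (fun _ : ℝ => -((starRingEnd ℂ) s1)) =o[cocompact ℝ]
        (fun t => ((letaR ρ σ x t : ℝ):ℂ)) :=
      ((constO _).trans_isLittleO (ee_lt (by norm_num : (0:ℝ) < 1/3))).trans_isBigO hOcoeEta
    exact (hOcoeEta.trans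
      (hc.right_isBigO_add.congr (fun _ => rfl) (fun t => add_comm _ _))).congr_right
      (fun t => (hEtaeq t).symm)
  -- powers
  have hXi2 : (fun t => lXi ρ σ s1 x t ^ 2) =O[cocompact ℝ] ee 2 :=
    ((mulO hXi_up hXi_up).congr_left (fun t => by ring)).trans (ee_le (by norm_num))
  have hXi3 : (fun t => lXi ρ σ s1 x t ^ 3) =O[cocompact ℝ] ee 3 :=
    ((mulO hXi_up (mulO hXi_up hXi_up)).congr_left (fun t => by ring)).trans
      (ee_le (by norm_num))
  have hEta2 : (fun t => lEta ρ σ s1 x t ^ 2) =O[cocompact ℝ] ee (2/3) :=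
    ((mulO hEta_up hEta_up).congr_left (fun t => by ring)).trans (ee_le (by norm_num))
  have hEta3 : (fun t => lEta ρ σ s1 x t ^ 3) =O[cocompact ℝ] ee 1 :=
    ((mulO hEta_up (mulO hEta_up hEta_up)).congr_left (fun t => by ring)).trans
      (ee_le (by norm_num))
  have htermO : (fun t => 2*(σ:ℂ)*(ρ:ℂ)*(t:ℂ)) =O[cocompact ℝ] ee 1 :=
    (htO.const_mul_left (2*(σ:ℂ)*(ρ:ℂ))).congr_left (fun t => by ring)
  -- S bounds
  have hS_up : lS ρ σ s1 s2 x =O[cocompact ℝ] ee 3 := by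
    have hterm : (fun t => (2/3:ℂ) * (ρ:ℂ)^2 * lXi ρ σ s1 x t ^ 3) =O[cocompact ℝ] ee 3 :=
      (hXi3.const_mul_left ((2/3:ℂ) * (ρ:ℂ)^2)).congr_left (fun t => by ring)
    exact (addU (addU (addU hterm htermO le_rfl (by norm_num)) hXi_up le_rfl (by norm_num))
      (constO s2) le_rfl (by norm_num)).congr_left (fun t => by simp only [lS])
  have hOS : ee 3 =O[cocompact ℝ] lS ρ σ s1 s2 x := by
    have hcne : ((2/3:ℂ) * (ρ:ℂ)^2) ≠ 0 := mul_ne_zero (by norm_num) (pow_ne_zero 2 hρC)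
    have hmain : ee 3 =O[cocompact ℝ] (fun t => (2/3:ℂ) * (ρ:ℂ)^2 * lXi ρ σ s1 x t ^ 3) := by
      have h1 : ee 3 =O[cocompact ℝ]
          (fun t => lXi ρ σ s1 x t * (lXi ρ σ s1 x t * lXi ρ σ s1 x t)) :=
        (ee_le (by norm_num)).trans (mulO' hOXi (mulO' hOXi hOXi))
      exact (h1.const_mul_right hcne).congr_right (fun t => by ring)
    have hrest : (fun t => 2*(σ:ℂ)*(ρ:ℂ)*(t:ℂ) + lXi ρ σ s1 x t + s2) =O[cocompact ℝ] ee 1 :=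
      addU (addU htermO hXi_up le_rfl le_rfl) (constO s2) le_rfl (by norm_num)
    exact (addO hmain hrest (by norm_num)).congr_right (fun t => by simp only [lS]; ring)
  -- R upper bound
  have hR_up : lR ρ σ s1 s2 x =O[cocompact ℝ] ee 1 := by
    have t1 : (fun t => -((2/3:ℂ)*(ρ:ℂ)^2 * lEta ρ σ s1 x t ^3)) =O[cocompact ℝ] ee 1 :=
      ((hEta3.const_mul_left ((2/3:ℂ)*(ρ:ℂ)^2)).congr_left (fun t => by ring)).neg_left
    have t2 : (fun t => 2*Complex.I*(σ:ℂ)*(ρ:ℂ) * lEta ρ σ s1 x t ^2) =O[cocompact ℝ] ee (2/3) :=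
      (hEta2.const_mul_left (2*Complex.I*(σ:ℂ)*(ρ:ℂ))).congr_left (fun t => by ring)
    exact (addU (addU (subU (addU t1 htermO le_rfl le_rfl) t2 le_rfl (by norm_num))
      hEta_up le_rfl (by norm_num)) (constO ((starRingEnd ℂ) s2)) le_rfl (by norm_num)).congr_left
      (fun t => by simp only [lR])
  -- the key identity for M = R + iσρη'²
  have hMid : lM ρ σ s1 s2 x =ᶠ[cocompact ℝ]
      (fun t => (ρ:ℂ) * ld ρ σ s1 x t * ((letaR ρ σ x t : ℝ):ℂ)^2 + lE ρ σ s1 s2 x t) := by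
    filter_upwards [hetaBig 1] with t h1
    have hane : letaR ρ σ x t ≠ 0 := fun h => by rw [h, abs_zero] at h1; linarith
    have hidR : (t:ℝ) = lW ρ σ x t * (letaR ρ σ x t)^2 + σ*ρ/3*(letaR ρ σ x t)^3 := by
      simp only [lW]
      field_simp
      ring
    have htC : (t:ℂ) = ((lW ρ σ x t :ℝ):ℂ) * ((letaR ρ σ x t :ℝ):ℂ)^2
        + (σ:ℂ)*(ρ:ℂ)/3*((letaR ρ σ x t:ℝ):ℂ)^3 := by
      exact_mod_cast congrArg (Complex.ofReal) hidR
    simp only [lM, lR, lE, ld]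
    rw [hEtaeq t, htC]
    linear_combination ((2:ℂ)/3*(ρ:ℂ)^2*((letaR ρ σ x t:ℝ):ℂ)^3) * hσ2
  -- E bound
  have hE_up : lE ρ σ s1 s2 x =O[cocompact ℝ] ee (1/3) :=
    (addU (hcoeEta_up.const_mul_left
        (-(2 * (ρ:ℂ) ^ 2 * ((starRingEnd ℂ) s1) ^ 2) + 2 * Complex.I * σ * ρ * (starRingEnd ℂ) s1 + 1))
      (constO ((2/3) * (ρ:ℂ) ^ 2 * ((starRingEnd ℂ) s1) ^ 3 - Complex.I * σ * ρ * ((starRingEnd ℂ) s1) ^ 2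
        - (starRingEnd ℂ) s1 + (starRingEnd ℂ) s2)) le_rfl (by norm_num)).congr_left
      (fun t => by simp only [lE])
  -- M bounds
  have hcoesq : (fun t => ((letaR ρ σ x t:ℝ):ℂ)^2) =O[cocompact ℝ] ee (2/3) :=
    ((mulO hcoeEta_up hcoeEta_up).congr_left (fun t => by ring)).trans (ee_le (by norm_num))
  have hMmain_up : (fun t => (ρ:ℂ) * ld ρ σ s1 x t * ((letaR ρ σ x t :ℝ):ℂ)^2)
      =O[cocompact ℝ] ee (2/3) :=
    (mulO (mulO (constO (ρ:ℂ)) hd_up) hcoesq).trans (ee_le (by norm_num))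
  have hM_up : lM ρ σ s1 s2 x =O[cocompact ℝ] ee (2/3) :=
    hMid.trans_isBigO (addU hMmain_up hE_up le_rfl (by norm_num))
  have hOM : ee (2/3) =O[cocompact ℝ] lM ρ σ s1 s2 x := by
    have h1 : ee (2/3) =O[cocompact ℝ]
        (fun t => ((ρ:ℂ) * ld ρ σ s1 x t) * (((letaR ρ σ x t:ℝ):ℂ) * ((letaR ρ σ x t:ℝ):ℂ))) :=
      (ee_le (by norm_num)).trans (mulO' (mulO' (constO' hρC) hd_lo) (mulO' hOcoeEta hOcoeEta))
    have hmain : ee (2/3) =O[cocompact ℝ]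
        (fun t => (ρ:ℂ) * ld ρ σ s1 x t * ((letaR ρ σ x t :ℝ):ℂ)^2) :=
      h1.congr_right (fun t => by ring)
    exact (addO hmain hE_up (by norm_num)).trans_eventuallyEq hMid.symm
  -- Drest
  have hDrest_up : lDrest ρ σ s1 s2 x =O[cocompact ℝ] ee (10/3) := by
    have d1 : (fun t => (ρ:ℂ)^2 * lXi ρ σ s1 x t ^2) =O[cocompact ℝ] ee 2 :=
      hXi2.const_mul_left ((ρ:ℂ)^2)
    have d2 : (fun t => 4*Complex.I*(σ:ℂ)*(ρ:ℂ)^3 * lXi ρ σ s1 x t ^2 * lR ρ σ s1 s2 x t)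
        =O[cocompact ℝ] ee (2+1) :=
      mulO (hXi2.const_mul_left (4*Complex.I*(σ:ℂ)*(ρ:ℂ)^3)) hR_up
    have d3 : (fun t => (ρ:ℂ)^2 * lEta ρ σ s1 x t ^2) =O[cocompact ℝ] ee (2/3) :=
      hEta2.const_mul_left ((ρ:ℂ)^2)
    have d4 : (fun t => 2*(ρ:ℂ)^2 * lXi ρ σ s1 x t * lEta ρ σ s1 x t)
        =O[cocompact ℝ] ee (1+1/3) :=
      mulO (hXi_up.const_mul_left (2*(ρ:ℂ)^2)) hEta_up
    have d5 : (fun t => 4*(ρ:ℂ)^2 * lXi ρ σ s1 x t * lR ρ σ s1 s2 x t)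
        =O[cocompact ℝ] ee (1+1) :=
      mulO (hXi_up.const_mul_left (4*(ρ:ℂ)^2)) hR_up
    have d6 : (fun t => 2*Complex.I*(σ:ℂ)*(ρ:ℂ) * lXi ρ σ s1 x t) =O[cocompact ℝ] ee 1 :=
      hXi_up.const_mul_left (2*Complex.I*(σ:ℂ)*(ρ:ℂ))
    have d7 : (fun t => 4*(ρ:ℂ)^2 * lEta ρ σ s1 x t * lS ρ σ s1 s2 x t)
        =O[cocompact ℝ] ee (1/3+3) :=
      mulO (hEta_up.const_mul_left (4*(ρ:ℂ)^2)) hS_up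
    have d8 : (fun t => 2*Complex.I*(σ:ℂ)*(ρ:ℂ) * lEta ρ σ s1 x t) =O[cocompact ℝ] ee (1/3) :=
      hEta_up.const_mul_left (2*Complex.I*(σ:ℂ)*(ρ:ℂ))
    exact (subU (addU (addU (addU (addU (addU (subU d1 d2 (by norm_num) (by norm_num))
      d3 le_rfl (by norm_num)) d4 le_rfl (by norm_num)) d5 le_rfl (by norm_num))
      d6 le_rfl (by norm_num)) (addU d7 d8 (by norm_num) (by norm_num) :
        (fun t => 4*(ρ:ℂ)^2 * lEta ρ σ s1 x t * lS ρ σ s1 s2 x t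
          + 2*Complex.I*(σ:ℂ)*(ρ:ℂ) * lEta ρ σ s1 x t) =O[cocompact ℝ] ee (10/3))
      le_rfl le_rfl) (constO 1) le_rfl (by norm_num)).congr_left
      (fun t => by simp only [lDrest]; ring)
  -- D identity and lower bound
  have hDid : ∀ t, lD ρ σ s1 s2 x t
      = -(4*(ρ:ℂ)^2) * lS ρ σ s1 s2 x t * lM ρ σ s1 s2 x t + lDrest ρ σ s1 s2 x t := by
    intro t
    simp only [lD, lP, lQ, lM, lDrest]
    ring
  have hOD : ee (11/3) =O[cocompact ℝ] lD ρ σ s1 s2 x := by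
    have hcne : (-(4*(ρ:ℂ)^2)) ≠ 0 := neg_ne_zero.mpr (mul_ne_zero (by norm_num) (pow_ne_zero 2 hρC))
    have h1 : ee (11/3) =O[cocompact ℝ]
        (fun t => lS ρ σ s1 s2 x t * lM ρ σ s1 s2 x t) :=
      (ee_le (by norm_num)).trans (mulO' hOS hOM)
    have hmain : ee (11/3) =O[cocompact ℝ]
        (fun t => -(4*(ρ:ℂ)^2) * lS ρ σ s1 s2 x t * lM ρ σ s1 s2 x t) :=
      (h1.const_mul_right hcne).congr_right (fun t => by ring)
    exact (addO hmain hDrest_up (by norm_num)).congr_right (fun t => (hDid t).symm)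
  obtain ⟨CD, hCD⟩ := isBigO_iff.mp hOD
  have hDne : ∀ᶠ t in cocompact ℝ, lD ρ σ s1 s2 x t ≠ 0 := by
    filter_upwards [hCD, ev_abs_ge 1] with t h1 h2
    intro h0
    rw [h0] at h1
    simp only [norm_zero, mul_zero] at h1
    have hp : (0:ℝ) < |t| ^ ((11:ℝ)/3) := Real.rpow_pos_of_pos (lt_of_lt_of_le one_pos h2) _
    have h3 : ‖ee (11/3) t‖ = |t| ^ ((11:ℝ)/3) := by
      simp only [ee, Real.norm_eq_abs]
      exact _root_.abs_of_nonneg hp.le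
    rw [h3] at h1
    linarith
  -- the combination G = 4ρdN + D
  have hGid : (fun t => 4*(ρ:ℂ) * ld ρ σ s1 x t * lN ρ σ s1 s2 x t + lD ρ σ s1 s2 x t)
      =ᶠ[cocompact ℝ]
      (fun t => 4*(ρ:ℂ)^3 * ld ρ σ s1 x t * lXi ρ σ s1 x t^2 * lR ρ σ s1 s2 x t
        + 4*(ρ:ℂ)^3 * ld ρ σ s1 x t * lS ρ σ s1 s2 x t
            * (lEta ρ σ s1 x t^2 - ((letaR ρ σ x t:ℝ):ℂ)^2)
        + 8*Complex.I*(σ:ℂ)*(ρ:ℂ)^2 * ld ρ σ s1 x t * lEta ρ σ s1 x t * lS ρ σ s1 s2 x t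
        - 4*(ρ:ℂ) * ld ρ σ s1 x t * lS ρ σ s1 s2 x t
        - 4*(ρ:ℂ)^2 * lS ρ σ s1 s2 x t * lE ρ σ s1 s2 x t
        + lDrest ρ σ s1 s2 x t) := by
    filter_upwards [hMid] with t hM
    have hM' : lR ρ σ s1 s2 x t + Complex.I*σ*ρ*lEta ρ σ s1 x t^2
        = (ρ:ℂ) * ld ρ σ s1 x t * ((letaR ρ σ x t:ℝ):ℂ)^2 + lE ρ σ s1 s2 x t := by
      simpa only [lM] using hM
    simp only [lN, lD, lP, lQ, lDrest]
    linear_combination (-(4:ℂ)*(ρ:ℂ)^2 * lS ρ σ s1 s2 x t) * hM'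
  have hdiff : (fun t => lEta ρ σ s1 x t^2 - ((letaR ρ σ x t:ℝ):ℂ)^2)
      =O[cocompact ℝ] ee (1/3) := by
    have h1 : ∀ t, lEta ρ σ s1 x t^2 - ((letaR ρ σ x t:ℝ):ℂ)^2
        = (-2*(starRingEnd ℂ) s1) * ((letaR ρ σ x t:ℝ):ℂ) + ((starRingEnd ℂ) s1)^2 := by
      intro t; rw [hEtaeq t]; ring
    exact (addU (hcoeEta_up.const_mul_left (-2*(starRingEnd ℂ) s1))
      (constO (((starRingEnd ℂ) s1)^2)) le_rfl (by norm_num)).congr_left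
      (fun t => (h1 t).symm)
  have hG_up : (fun t => 4*(ρ:ℂ) * ld ρ σ s1 x t * lN ρ σ s1 s2 x t + lD ρ σ s1 s2 x t)
      =O[cocompact ℝ] ee (10/3) := by
    refine hGid.trans_isBigO ?_
    have T1 : (fun t => 4*(ρ:ℂ)^3 * ld ρ σ s1 x t * lXi ρ σ s1 x t^2 * lR ρ σ s1 s2 x t)
        =O[cocompact ℝ] ee ((0+2)+1) :=
      mulO (mulO (hd_up.const_mul_left (4*(ρ:ℂ)^3)) hXi2) hR_up
    have T2 : (fun t => 4*(ρ:ℂ)^3 * ld ρ σ s1 x t * lS ρ σ s1 s2 x t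
        * (lEta ρ σ s1 x t^2 - ((letaR ρ σ x t:ℝ):ℂ)^2)) =O[cocompact ℝ] ee ((0+3)+1/3) :=
      mulO (mulO (hd_up.const_mul_left (4*(ρ:ℂ)^3)) hS_up) hdiff
    have T3 : (fun t => 8*Complex.I*(σ:ℂ)*(ρ:ℂ)^2 * ld ρ σ s1 x t * lEta ρ σ s1 x t
        * lS ρ σ s1 s2 x t) =O[cocompact ℝ] ee ((0+1/3)+3) :=
      mulO (mulO (hd_up.const_mul_left (8*Complex.I*(σ:ℂ)*(ρ:ℂ)^2)) hEta_up) hS_up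
    have T4 : (fun t => 4*(ρ:ℂ) * ld ρ σ s1 x t * lS ρ σ s1 s2 x t)
        =O[cocompact ℝ] ee (0+3) :=
      mulO (hd_up.const_mul_left (4*(ρ:ℂ))) hS_up
    have T5 : (fun t => 4*(ρ:ℂ)^2 * lS ρ σ s1 s2 x t * lE ρ σ s1 s2 x t)
        =O[cocompact ℝ] ee (3+1/3) :=
      mulO (hS_up.const_mul_left (4*(ρ:ℂ)^2)) hE_up
    exact addU (subU (subU (addU (addU T1 T2 (by norm_num) (by norm_num))
      T3 le_rfl (by norm_num)) T4 le_rfl (by norm_num)) T5 le_rfl (by norm_num))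
      hDrest_up le_rfl le_rfl
  -- invert the denominator
  have hODd : ee (11/3 + 0) =O[cocompact ℝ]
      (fun t => lD ρ σ s1 s2 x t * ld ρ σ s1 x t) := mulO' hOD hd_lo
  have hInv : (fun t => (lD ρ σ s1 s2 x t * ld ρ σ s1 x t)⁻¹)
      =O[cocompact ℝ] ee (-(11/3 + 0)) := by
    have h0 : ∀ᶠ t in cocompact ℝ, ee (11/3 + 0) t = 0
        → lD ρ σ s1 s2 x t * ld ρ σ s1 x t = 0 := by
      filter_upwards [ev_abs_ge 1] with t ht h0
      exfalso
      have hp : (0:ℝ) < |t| ^ ((11:ℝ)/3 + 0) :=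
        Real.rpow_pos_of_pos (lt_of_lt_of_le one_pos ht) _
      exact hp.ne' h0
    exact (hODd.inv_rev h0).congr_right
      (fun t => by simp [ee, Real.rpow_neg (abs_nonneg t)])
  have hfrac : (fun t => 2*Complex.I*(σ:ℂ)*(ρ:ℂ)
      * (4*(ρ:ℂ) * ld ρ σ s1 x t * lN ρ σ s1 s2 x t + lD ρ σ s1 s2 x t)
      / (lD ρ σ s1 s2 x t * ld ρ σ s1 x t))
      =O[cocompact ℝ] (fun t : ℝ => |t| ^ (-(1:ℝ)/3)) := by
    have h1 := mulO (hG_up.const_mul_left (2*Complex.I*(σ:ℂ)*(ρ:ℂ))) hInv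
    have h2 := h1.trans (ee_le (by norm_num : (10:ℝ)/3 + -(11/3 + 0) ≤ -(1:ℝ)/3))
    exact h2.congr_left (fun t => (div_eq_mul_inv _ _).symm)
  -- the eventual identity between the goal and the explicit fraction
  have hEq : (fun t : ℝ => u2sol ρ σ φ s1 s2 (x t) t *
        Complex.exp (-(2 * Complex.I * ρ ^ 2 * t) - Complex.I * φ)
      - (ρ : ℂ) * (1 - 2 * Complex.I * σ /
          (2 * σ * ((t * (x t - 2 * σ * ρ * t)⁻¹ ^ 2
              - (σ * ρ / 3) * (x t - 2 * σ * ρ * t) : ℝ) : ℂ)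
            + 2 * ρ * (starRingEnd ℂ) s1 - Complex.I * σ))) =ᶠ[cocompact ℝ]
      (fun t => 2*Complex.I*(σ:ℂ)*(ρ:ℂ)
        * (4*(ρ:ℂ) * ld ρ σ s1 x t * lN ρ σ s1 s2 x t + lD ρ σ s1 s2 x t)
        / (lD ρ σ s1 s2 x t * ld ρ σ s1 x t)) := by
    filter_upwards [hDne] with t hD
    have hu2 : u2sol ρ σ φ s1 s2 (x t) t
        = (ρ:ℂ) * Complex.exp (2*Complex.I*ρ^2*t + Complex.I*φ)
          + 8*Complex.I*σ*ρ^2*Complex.exp (2*Complex.I*ρ^2*t + Complex.I*φ)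
            * lN ρ σ s1 s2 x t / lD ρ σ s1 s2 x t := by
      simp only [u2sol, lN, lD, lXi, lEta, lS, lR, lP, lQ]
    have hexp : Complex.exp (-(2 * Complex.I * ρ ^ 2 * t) - Complex.I * φ)
        = (Complex.exp (2*Complex.I*ρ^2*t + Complex.I*φ))⁻¹ := by
      rw [← Complex.exp_neg]
      congr 1
      ring
    have hdt : (2 * (σ:ℂ) * ((t * (x t - 2 * σ * ρ * t)⁻¹ ^ 2
          - (σ * ρ / 3) * (x t - 2 * σ * ρ * t) : ℝ) : ℂ)
        + 2 * ρ * (starRingEnd ℂ) s1 - Complex.I * σ) = ld ρ σ s1 x t := by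
      simp only [ld, lW, letaR]
    have hd := hdne t
    rw [hu2, hexp, hdt]
    have hexpne : Complex.exp (2*Complex.I*ρ^2*t + Complex.I*φ) ≠ 0 := Complex.exp_ne_zero _
    field_simp
    ring
  exact hEq.trans_isBigO hfrac
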